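/- Let V and C be finite types, f : V → C, p ∈ C, and k : ℕ. For a vote function h let score_h c = card {v | h v = c}, and say p is a winner under h if ∀ c, score_h c ≤ score_h p. Assume p is not a winner under f, and assume there exists g : V → C with card {v | g v ≠ f v} ≤ k under which p is a winner. Let w be any candidate with ∀ c, score_f c ≤ score_f w, and let v₀ be any voter with f v₀ = w. Then, setting f' = Function.update f v₀ p, there exists g' : V → C with card {u | g' u ≠ f' u} ≤ k − 1 under which p is a winner. -/
import Mathlib


/-- The plurality score of candidate `c` under vote function `f`. -/
def plScore {V C : Type*} [Fintype V] [DecidableEq C] (f : V → C) (c : C) : ℕ :=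
  (Finset.univ.filter fun v => f v = c).card

section helpers
variable {V C : Type*} [Fintype V] [DecidableEq V] [DecidableEq C]

omit [DecidableEq V] in
lemma plScore_cast (g : V → C) (c : C) :
    (plScore g c : ℤ) = ∑ v : V, if g v = c then (1:ℤ) else 0 := by
  rw [plScore, Finset.card_filter]; push_cast; simp

lemma plScore_update (g : V → C) (a : V) (x : C) (c : C) :
    (plScore (Function.update g a x) c : ℤ) =
      plScore g c + (if x = c then 1 else 0) - (if g a = c then 1 else 0) := by
  rw [plScore_cast, plScore_cast]
  have h : ∀ v : V, (if Function.update g a x v = c then (1:ℤ) else 0) =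
      Function.update (fun v => if g v = c then (1:ℤ) else 0) a
        (if x = c then 1 else 0) v := by
    intro v; rcases eq_or_ne v a with rfl | h <;> simp [Function.update_apply, *]
  rw [Finset.sum_congr rfl fun v _ => h v, Finset.sum_update_of_mem (Finset.mem_univ a)]
  rw [show (Finset.univ : Finset V) \ {a} = Finset.univ.erase a by
    rw [Finset.sdiff_singleton_eq_erase]]
  rw [← Finset.sum_erase_add Finset.univ _ (Finset.mem_univ a)]
  ring
end helpers

/-- Exchange lemma for the greedy plurality-bribery algorithm: if `p` is not yet a
winner but can be made one by at most `k` bribes, then after bribing any voter `v₀`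
of any current winner `w` to vote for `p`, at most `k − 1` further bribes suffice. -/
theorem plurality_greedy_exchange
    {V C : Type*} [Fintype V] [Fintype C] [DecidableEq V] [DecidableEq C]
    (f : V → C) (p : C) (k : ℕ)
    (hnotwin : ¬ ∀ c, plScore f c ≤ plScore f p)
    (hbribe : ∃ g : V → C,
        (Finset.univ.filter fun v => g v ≠ f v).card ≤ k ∧
        ∀ c, plScore g c ≤ plScore g p)
    (w : C) (hw : ∀ c, plScore f c ≤ plScore f w)
    (v₀ : V) (hv₀ : f v₀ = w) :
    ∃ g' : V → C,
      (Finset.univ.filter fun u => g' u ≠ Function.update f v₀ p u).card ≤ k - 1 ∧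
      ∀ c, plScore g' c ≤ plScore g' p := by
  obtain ⟨g, hgcard, hgwin⟩ := hbribe
  have hpw : p ≠ w := by rintro rfl; exact hnotwin hw
  have hZ : ∀ c, (plScore g c : ℤ) ≤ plScore g p := fun c => by exact_mod_cast hgwin c
  -- generic cardinality bound
  have key : ∀ (g' : V → C) (s : V), g s ≠ f s →
      (∀ v, g' v ≠ Function.update f v₀ p v → v ≠ s ∧ g v ≠ f v) →
      (Finset.univ.filter fun u => g' u ≠ Function.update f v₀ p u).card ≤ k - 1 := by
    intro g' s hs hsub
    have h1 : (Finset.univ.filter fun u => g' u ≠ Function.update f v₀ p u) ⊆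
        (Finset.univ.filter fun v => g v ≠ f v).erase s := by
      intro v hv
      rw [Finset.mem_filter] at hv
      obtain ⟨hne, hgf⟩ := hsub v hv.2
      exact Finset.mem_erase.2 ⟨hne, Finset.mem_filter.2 ⟨Finset.mem_univ v, hgf⟩⟩
    refine (Finset.card_le_card h1).trans ?_
    rw [Finset.card_erase_of_mem (Finset.mem_filter.2 ⟨Finset.mem_univ s, hs⟩)]
    exact Nat.sub_le_sub_right hgcard 1
  by_cases h0 : g v₀ = f v₀
  · -- v₀ unbribed by g : pick some bribed u, unbribe it, bribe v₀ to p
    have hgv₀ : g v₀ = w := h0.trans hv₀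
    have master : ∀ u : V, u ≠ v₀ → ∀ c,
        (plScore (Function.update (Function.update g u (f u)) v₀ p) c : ℤ) =
          plScore g c + (if f u = c then 1 else 0) - (if g u = c then 1 else 0)
            + (if p = c then 1 else 0) - (if w = c then 1 else 0) := by
      intro u hne c
      rw [plScore_update, plScore_update, Function.update_of_ne (Ne.symm hne), hgv₀]
    have cardb : ∀ u : V, u ≠ v₀ → g u ≠ f u →
        (Finset.univ.filter fun v =>
          Function.update (Function.update g u (f u)) v₀ p v ≠ Function.update f v₀ p v).card
          ≤ k - 1 := by
      intro u hne hu
      refine key _ u hu ?_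
      intro v hv
      have hvv₀ : v ≠ v₀ := by rintro rfl; simp at hv
      have hvu : v ≠ u := by
        rintro rfl
        rw [Function.update_of_ne hvv₀, Function.update_self, Function.update_of_ne hvv₀] at hv
        exact hv rfl
      rw [Function.update_of_ne hvv₀, Function.update_of_ne hvu,
        Function.update_of_ne hvv₀] at hv
      exact ⟨hvu, hv⟩
    have hDne : ∃ u, g u ≠ f u := by
      by_contra h
      push_neg at h
      exact hnotwin ((funext h : g = f) ▸ hgwin)
    by_cases hcase : ∃ u, g u ≠ f u ∧ f u = w
    · obtain ⟨u, hu, hfu⟩ := hcase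
      have hne : u ≠ v₀ := by rintro rfl; exact hu h0
      refine ⟨_, cardb u hne hu, fun c => ?_⟩
      have h1 := master u hne c
      have h2 := master u hne p
      have hc := hZ c
      have hguw : g u ≠ w := hfu ▸ hu
      rw [← Nat.cast_le (α := ℤ), h1, h2]
      clear h1 h2 master cardb key hgcard hgwin hnotwin hw hZ hDne
      split_ifs <;> (try simp_all) <;> omega
    · push_neg at hcase
      by_cases hcase2 : ∃ u, g u ≠ f u ∧ g u ≠ p
      · obtain ⟨u, hu, hgup⟩ := hcase2
        have hne : u ≠ v₀ := by rintro rfl; exact hu h0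
        have hfuw : f u ≠ w := hcase u hu
        refine ⟨_, cardb u hne hu, fun c => ?_⟩
        have h1 := master u hne c
        have h2 := master u hne p
        have hc := hZ c
        rw [← Nat.cast_le (α := ℤ), h1, h2]
        clear h1 h2 master cardb key hgcard hgwin hnotwin hw hZ hDne hcase
        split_ifs <;> (try simp_all) <;> omega
      · push_neg at hcase2
        obtain ⟨u, hu⟩ := hDne
        have hne : u ≠ v₀ := by rintro rfl; exact hu h0
        have hfuw : f u ≠ w := hcase u hu
        have hgup : g u = p := hcase2 u hu
        have hfup : f u ≠ p := fun h => hu (hgup.trans h.symm)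
        -- key numeric fact : plScore g (f u) + 1 ≤ plScore g p
        have hlt : plScore g (f u) < plScore f (f u) := by
          apply Finset.card_lt_card
          refine (Finset.ssubset_iff_of_subset ?_).2 ⟨u, ?_, ?_⟩
          · intro v hv
            rw [Finset.mem_filter] at hv ⊢
            refine ⟨hv.1, ?_⟩
            by_cases hvd : g v = f v
            · rw [← hvd]; exact hv.2
            · exact absurd (hv.2 ▸ hcase2 v hvd : f u = p) hfup
          · exact Finset.mem_filter.2 ⟨Finset.mem_univ u, rfl⟩
          · simp only [Finset.mem_filter, Finset.mem_univ, true_and]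
            rw [hgup]; exact Ne.symm hfup
        have hle1 : plScore f (f u) ≤ plScore f w := hw (f u)
        have hle2 : plScore f w ≤ plScore g w := by
          apply Finset.card_le_card
          intro v hv
          rw [Finset.mem_filter] at hv ⊢
          refine ⟨hv.1, ?_⟩
          by_cases hvd : g v = f v
          · rw [hvd]; exact hv.2
          · exact absurd hv.2 (hcase v hvd)
        have hkey : (plScore g (f u) : ℤ) + 1 ≤ plScore g p := by
          have := hgwin w; omega
        refine ⟨_, cardb u hne hu, fun c => ?_⟩
        have h1 := master u hne c
        have h2 := master u hne p
        have hc := hZ c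
        rw [← Nat.cast_le (α := ℤ), h1, h2]
        clear h1 h2 master cardb key hgcard hgwin hnotwin hw hZ hcase hcase2 hlt hle1 hle2
        rw [if_neg hfup, if_pos hgup, if_pos rfl, if_neg (Ne.symm hpw), hgup]
        by_cases hcfu : f u = c
        · subst hcfu
          split_ifs <;> omega
        · rw [if_neg hcfu]
          split_ifs <;> omega
  · -- v₀ already bribed by g : just redirect its bribe to p
    refine ⟨Function.update g v₀ p, key _ v₀ h0 ?_, fun c => ?_⟩
    · intro v hv
      have hvv₀ : v ≠ v₀ := by rintro rfl; simp at hv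
      rw [Function.update_of_ne hvv₀, Function.update_of_ne hvv₀] at hv
      exact ⟨hvv₀, hv⟩
    · have h1 := plScore_update g v₀ p c
      have h2 := plScore_update g v₀ p p
      have hc := hZ c
      rw [← Nat.cast_le (α := ℤ), h1, h2]
      clear h1 h2 key hgcard hgwin hnotwin hw hZ
      split_ifs <;> (try simp_all) <;> omega
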